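/- Let M be a finite monoid, w = w₁⋯wₙ ∈ M* a word, and j ≤ n. Then there exist integers j = ℓ₀ < ℓ₁ < ⋯ < ℓₘ = n+1 with m ≤ |M| such that: (i) for 0 ≤ s < m and ℓₛ ≤ i < ℓₛ₊₁, the products w_j⋯w_{ℓₛ} and w_j⋯w_i are J-equivalent; and (ii) for 0 ≤ s < m−1, the products w_j⋯w_{ℓₛ₊₁−1} and w_j⋯w_{ℓₛ₊₁} are not J-equivalent. -/

import Mathlib

def JLe {M : Type*} [Monoid M] (x y : M) : Prop := ∃ a b : M, x = a * y * b

def JEq {M : Type*} [Monoid M] (x y : M) : Prop := JLe x y ∧ JLe y x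

/-- The product `w_j ⋯ w_k` of the letters of `w` from position `j` to position `k`. -/
def wprod {M : Type*} [Monoid M] (w : ℕ → M) (j k : ℕ) : M :=
  ((List.range' j (k + 1 - j)).map w).prod

section Aux

variable {M : Type*} [Monoid M]

lemma JLe_refl (x : M) : JLe x x := ⟨1, 1, by simp⟩

lemma JLe_trans {x y z : M} (h1 : JLe x y) (h2 : JLe y z) : JLe x z := by
  obtain ⟨a, b, rfl⟩ := h1
  obtain ⟨c, d, rfl⟩ := h2
  exact ⟨a * c, d * b, by simp [mul_assoc]⟩

lemma JEq_refl (x : M) : JEq x x := ⟨JLe_refl x, JLe_refl x⟩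

lemma JEq_symm {x y : M} (h : JEq x y) : JEq y x := ⟨h.2, h.1⟩

lemma JEq_trans {x y z : M} (h1 : JEq x y) (h2 : JEq y z) : JEq x z :=
  ⟨JLe_trans h1.1 h2.1, JLe_trans h2.2 h1.2⟩

lemma wprod_prefix_le (w : ℕ → M) {j k k' : ℕ} (h1 : j ≤ k) (h2 : k ≤ k') :
    JLe (wprod w j k') (wprod w j k) := by
  refine ⟨1, ((List.range' (k + 1) (k' - k)).map w).prod, ?_⟩
  rw [one_mul, wprod, wprod]
  have h := List.range'_append (s := j) (m := k + 1 - j) (n := k' - k) (step := 1)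
  rw [one_mul, show j + (k + 1 - j) = k + 1 by omega] at h
  rw [show k' + 1 - j = (k + 1 - j) + (k' - k) by omega, ← h, List.map_append, List.prod_append]

lemma j_falling_aux (w : ℕ → M) (j : ℕ) : ∀ n, j ≤ n →
    ∃ m : ℕ, 1 ≤ m ∧ ∃ ℓ : ℕ → ℕ,
      ℓ 0 = j ∧ ℓ m = n + 1 ∧
      (∀ s < m, ℓ s < ℓ (s + 1)) ∧
      (∀ s < m, ∀ i, ℓ s ≤ i → i < ℓ (s + 1) → JEq (wprod w j (ℓ s)) (wprod w j i)) ∧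
      (∀ s, s + 1 < m → ¬ JEq (wprod w j (ℓ s)) (wprod w j (ℓ (s + 1)))) := by
  intro n hn
  induction n, hn using Nat.le_induction with
  | base =>
    refine ⟨1, le_refl 1, fun s => j + s, by simp, by simp,
      fun s _ => by change j + s < j + (s + 1); omega, ?_, fun s hs => by omega⟩
    intro s hs i hi1 hi2
    interval_cases s
    have h1 : j + 0 ≤ i := hi1
    have h2 : i < j + (0 + 1) := hi2
    have : i = j := by omega
    subst this
    exact JEq_refl _
  | succ n hn ih =>
    obtain ⟨m, hm1, ℓ, h0, hend, hinc, hcst, hA⟩ := ih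
    by_cases hc : JEq (wprod w j (ℓ (m - 1))) (wprod w j (n + 1))
    · refine ⟨m, hm1, fun s => if s = m then n + 2 else ℓ s, ?_, ?_, ?_, ?_, ?_⟩
      · simp only [if_neg (by omega : (0:ℕ) ≠ m)]; exact h0
      · simp
      · intro s hs
        simp only [if_neg (by omega : s ≠ m)]
        by_cases h : s + 1 = m
        · rw [if_pos h]
          have h2 : ℓ (s + 1) = n + 1 := h ▸ hend
          have := hinc s hs
          omega
        · rw [if_neg h]; exact hinc s hs
      · intro s hs i hi1 hi2
        simp only [if_neg (by omega : s ≠ m)] at *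
        by_cases h : s + 1 = m
        · rw [if_pos h] at hi2
          have h2 : ℓ (s + 1) = n + 1 := h ▸ hend
          by_cases hin : i ≤ n
          · exact hcst s hs i hi1 (by omega)
          · have : i = n + 1 := by omega
            subst this
            have hsm : s = m - 1 := by omega
            rw [hsm]; exact hc
        · rw [if_neg h] at hi2
          exact hcst s hs i hi1 hi2
      · intro s hs
        simp only [if_neg (by omega : s ≠ m), if_neg (by omega : s + 1 ≠ m)]
        exact hA s hs
    · refine ⟨m + 1, by omega, fun s => if s = m + 1 then n + 2 else ℓ s, ?_, ?_, ?_, ?_, ?_⟩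
      · simp only [if_neg (by omega : (0:ℕ) ≠ m + 1)]; exact h0
      · simp
      · intro s hs
        simp only [if_neg (by omega : s ≠ m + 1)]
        by_cases h : s + 1 = m + 1
        · rw [if_pos h]
          have : ℓ s ≤ ℓ m := by
            have hsm : s = m := by omega
            rw [hsm]
          omega
        · rw [if_neg h]
          exact hinc s (by omega)
      · intro s hs i hi1 hi2
        simp only [if_neg (by omega : s ≠ m + 1)] at *
        by_cases h : s + 1 = m + 1
        · rw [if_pos h] at hi2
          have hsm : s = m := by omega
          subst hsm
          rw [hend] at hi1
          have : i = n + 1 := by omega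
          subst this
          rw [hend]
          exact JEq_refl _
        · rw [if_neg h] at hi2
          exact hcst s (by omega) i hi1 hi2
      · intro s hs
        simp only [if_neg (by omega : s ≠ m + 1), if_neg (by omega : s + 1 ≠ m + 1)]
        by_cases h : s + 1 = m
        · have hsm : s = m - 1 := by omega
          subst hsm
          rw [h, hend]
          exact hc
        · exact hA s (by omega)

end Aux

/-- Falling J-classes along left-to-right evaluation: there are indices
    j = ℓ₀ < ℓ₁ < ⋯ < ℓₘ = n+1 with m ≤ |M| such that the J-class of the prefix
    evaluation is constant on each interval and drops at each ℓ_{s+1}. -/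
theorem j_falling {M : Type*} [Monoid M] [Finite M] (w : ℕ → M) (n j : ℕ)
    (hj : 1 ≤ j) (hjn : j ≤ n) :
    ∃ m : ℕ, m ≤ Nat.card M ∧ ∃ ℓ : ℕ → ℕ,
      ℓ 0 = j ∧ ℓ m = n + 1 ∧
      (∀ s < m, ℓ s < ℓ (s + 1)) ∧
      (∀ s < m, ∀ i, ℓ s ≤ i → i < ℓ (s + 1) → JEq (wprod w j (ℓ s)) (wprod w j i)) ∧
      (∀ s, s + 1 < m → ¬ JEq (wprod w j (ℓ (s + 1) - 1)) (wprod w j (ℓ (s + 1)))) := by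
  obtain ⟨m, hm1, ℓ, h0, hend, hinc, hcst, hA⟩ := j_falling_aux w j n hjn
  -- monotonicity of ℓ
  have hmono0 : ∀ d s, s + d ≤ m → ℓ s ≤ ℓ (s + d) := by
    intro d
    induction d with
    | zero => intro s _; exact le_refl _
    | succ d ihd =>
      intro s h
      have h1 : ℓ s ≤ ℓ (s + d) := ihd s (by omega)
      have h2 : ℓ (s + d) < ℓ (s + d + 1) := hinc (s + d) (by omega)
      have h3 : ℓ (s + (d + 1)) = ℓ (s + d + 1) := rfl
      omega
  have hmono : ∀ s t, s ≤ t → t ≤ m → ℓ s ≤ ℓ t := by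
    intro s t h1 h2
    have := hmono0 (t - s) s (by omega)
    rwa [show s + (t - s) = t by omega] at this
  have hjℓ : ∀ s, s ≤ m → j ≤ ℓ s := by
    intro s hs
    have := hmono 0 s (by omega) hs
    omega
  -- injectivity gives the cardinality bound
  have hcard : m ≤ Nat.card M := by
    have hinj : Function.Injective (fun s : Fin m => wprod w j (ℓ s)) := by
      intro s t hst
      simp only at hst
      by_contra hne
      have hne' : (s : ℕ) ≠ (t : ℕ) := fun h => hne (Fin.ext h)
      -- wlog s < t
      rcases Nat.lt_or_ge (s : ℕ) (t : ℕ) with h | h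
      · have hd : ¬ JEq (wprod w j (ℓ s)) (wprod w j (ℓ (s + 1))) := hA s (by omega)
        apply hd
        constructor
        · rw [hst]
          exact wprod_prefix_le w (hjℓ (s + 1) (by omega)) (hmono (s + 1) t (by omega) (by omega))
        · exact wprod_prefix_le w (hjℓ s (by omega)) (le_of_lt (hinc s (by omega)))
      · have hlt : (t : ℕ) < (s : ℕ) := by omega
        have hd : ¬ JEq (wprod w j (ℓ t)) (wprod w j (ℓ (t + 1))) := hA t (by omega)
        apply hd
        constructor
        · rw [← hst]
          exact wprod_prefix_le w (hjℓ (t + 1) (by omega)) (hmono (t + 1) s (by omega) (by omega))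
        · exact wprod_prefix_le w (hjℓ t (by omega)) (le_of_lt (hinc t (by omega)))
    have := Nat.card_le_card_of_injective _ hinj
    simpa using this
  refine ⟨m, hcard, ℓ, h0, hend, hinc, hcst, ?_⟩
  intro s hs hJ
  apply hA s hs
  have h1 : JEq (wprod w j (ℓ s)) (wprod w j (ℓ (s + 1) - 1)) := by
    apply hcst s (by omega)
    · have := hinc s (by omega); omega
    · have := hinc s (by omega); omega
  exact JEq_trans h1 hJ
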